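/- Let τ(x) = ‖y⁻¹·x‖_K⁴ and 1 < p. Then, where τ > 0, the horizontal p-Laplacian satisfies Δ_{0,p}τ := ‖∇₀τ‖^{p-2}Δ₀τ + (p-2)‖∇₀τ‖^{p-4}Δ_{0,∞}τ = (3p/4)·‖∇₀τ‖^p/τ. In particular Δ_{0,p}τ ≥ 0. -/

import Mathlib

/-- The Heisenberg horizontal vector field `X₁ = ∂_{x₁} - (x₂/2)∂_{x₃}`. -/
noncomputable def X1 (f : ℝ × ℝ × ℝ → ℝ) (x : ℝ × ℝ × ℝ) : ℝ :=
  deriv (fun t => f (t, x.2.1, x.2.2)) x.1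
    - x.2.1 / 2 * deriv (fun t => f (x.1, x.2.1, t)) x.2.2

/-- The Heisenberg horizontal vector field `X₂ = ∂_{x₂} + (x₁/2)∂_{x₃}`. -/
noncomputable def X2 (f : ℝ × ℝ × ℝ → ℝ) (x : ℝ × ℝ × ℝ) : ℝ :=
  deriv (fun t => f (x.1, t, x.2.2)) x.2.1
    + x.1 / 2 * deriv (fun t => f (x.1, x.2.1, t)) x.2.2

/-- The Heisenberg group multiplication on `ℝ³`. -/
noncomputable def hmul (x y : ℝ × ℝ × ℝ) : ℝ × ℝ × ℝ :=
  (x.1 + y.1, x.2.1 + y.2.1, x.2.2 + y.2.2 + (x.1 * y.2.1 - y.1 * x.2.1) / 2)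

/-- The Heisenberg group inverse. -/
def hinv (x : ℝ × ℝ × ℝ) : ℝ × ℝ × ℝ := (-x.1, -x.2.1, -x.2.2)

/-- The Korányi quasi-norm on `ℍ¹ = ℝ³`. -/
noncomputable def knorm (x : ℝ × ℝ × ℝ) : ℝ :=
  ((x.1 ^ 2 + x.2.1 ^ 2) ^ 2 + 16 * x.2.2 ^ 2) ^ ((1 : ℝ) / 4)

/-- The Korányi distance `d(x,x₀) = ‖x₀⁻¹·x‖_K`. -/
noncomputable def kdist (x x0 : ℝ × ℝ × ℝ) : ℝ := knorm (hmul (hinv x0) x)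



private lemma pow4_rpow {A : ℝ} (hA : 0 ≤ A) : (A ^ ((1:ℝ)/4)) ^ (4:ℕ) = A := by
  rw [← Real.rpow_natCast (A ^ ((1:ℝ)/4)) 4, ← Real.rpow_mul hA]
  norm_num

private lemma derivA (A c d e t : ℝ) :
    deriv (fun s => (A + (s - c)^2)^2 + 16*(d + e*s)^2) t
      = 4*(A + (t - c)^2)*(t - c) + 32*(d + e*t)*e := by
  have h1 := ((((hasDerivAt_id t).sub_const c).pow 2).const_add A).pow 2
  have h2 := ((((hasDerivAt_id t).const_mul e).const_add d).pow 2).const_mul 16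
  have h := h1.add h2
  simp only [id_eq] at h
  refine h.deriv.trans ?_
  simp only [Pi.pow_apply]
  ring

private lemma derivB (K d t : ℝ) : deriv (fun s => K + 16*(s + d)^2) t = 32*(t + d) := by
  have h := ((((hasDerivAt_id t).add_const d).pow 2).const_mul 16).const_add K
  simp only [id_eq] at h
  refine h.deriv.trans ?_
  ring

private lemma derivC (A c k d e t : ℝ) :
    deriv (fun s => 4*((A + (s - c)^2)*(s - c)) + k*(d + e*s)) t
      = 8*(t-c)^2 + 4*(A + (t-c)^2) + k*e := by
  have h1 := (((((hasDerivAt_id t).sub_const c).pow 2).const_add A).mul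
      ((hasDerivAt_id t).sub_const c)).const_mul 4
  have h2 := (((hasDerivAt_id t).const_mul e).const_add d).const_mul k
  have h := h1.add h2
  simp only [id_eq] at h
  refine h.deriv.trans ?_
  simp only [Pi.pow_apply]
  ring

private lemma derivD (A c V k d e t : ℝ) :
    deriv (fun s => 4*((A + (s - c)^2)*V) + k*((d + e*s)*(s - c))) t
      = 8*(t-c)*V + k*(e*(t-c) + (d+e*t)) := by
  have h1 := ((((hasDerivAt_id t).sub_const c).pow 2).const_add A).mul_const V |>.const_mul 4
  have h2 := ((((hasDerivAt_id t).const_mul e).const_add d).mul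
      ((hasDerivAt_id t).sub_const c)).const_mul k
  have h := h1.add h2
  simp only [id_eq] at h
  refine h.deriv.trans ?_
  ring

private lemma derivE (m k d t : ℝ) : deriv (fun s => m + k*(s + d)) t = k := by
  have h := (((hasDerivAt_id t).add_const d).const_mul k).const_add m
  simp only [id_eq] at h
  rw [h.deriv]
  ring

private lemma tau_eq (y z : ℝ × ℝ × ℝ) :
    kdist z y ^ 4 = ((z.1 - y.1)^2 + (z.2.1 - y.2.1)^2)^2
      + 16*(z.2.2 - y.2.2 + (y.2.1*z.1 - y.1*z.2.1)/2)^2 := by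
  simp only [kdist, knorm, hmul, hinv]
  rw [pow4_rpow (by positivity)]
  ring

/-- `X₁τ`. -/
private noncomputable def aF (y z : ℝ × ℝ × ℝ) : ℝ :=
  4*(((z.1-y.1)^2+(z.2.1-y.2.1)^2)*(z.1-y.1))
    - 16*((z.2.2-y.2.2+(y.2.1*z.1-y.1*z.2.1)/2)*(z.2.1-y.2.1))

/-- `X₂τ`. -/
private noncomputable def bF (y z : ℝ × ℝ × ℝ) : ℝ :=
  4*(((z.1-y.1)^2+(z.2.1-y.2.1)^2)*(z.2.1-y.2.1))
    + 16*((z.2.2-y.2.2+(y.2.1*z.1-y.1*z.2.1)/2)*(z.1-y.1))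

private lemma X1_tau (y : ℝ × ℝ × ℝ) : X1 (fun z => kdist z y ^ 4) = aF y := by
  funext z
  unfold X1
  have h1 : (fun t => kdist (t, z.2.1, z.2.2) y ^ 4)
      = fun s => ((z.2.1-y.2.1)^2 + (s - y.1)^2)^2
          + 16*((z.2.2 - y.2.2 - y.1*z.2.1/2) + (y.2.1/2)*s)^2 := by
    funext t; rw [tau_eq]; ring
  have h3 : (fun t => kdist (z.1, z.2.1, t) y ^ 4)
      = fun s => (((z.1-y.1)^2 + (z.2.1-y.2.1)^2)^2)
          + 16*(s + (- y.2.2 + (y.2.1*z.1 - y.1*z.2.1)/2))^2 := by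
    funext t; rw [tau_eq]; ring
  rw [h1, h3, derivA, derivB, aF]
  ring

private lemma X2_tau (y : ℝ × ℝ × ℝ) : X2 (fun z => kdist z y ^ 4) = bF y := by
  funext z
  unfold X2
  have h2 : (fun t => kdist (z.1, t, z.2.2) y ^ 4)
      = fun s => ((z.1-y.1)^2 + (s - y.2.1)^2)^2
          + 16*((z.2.2 - y.2.2 + y.2.1*z.1/2) + (-y.1/2)*s)^2 := by
    funext t; rw [tau_eq]; ring
  have h3 : (fun t => kdist (z.1, z.2.1, t) y ^ 4)
      = fun s => (((z.1-y.1)^2 + (z.2.1-y.2.1)^2)^2)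
          + 16*(s + (- y.2.2 + (y.2.1*z.1 - y.1*z.2.1)/2))^2 := by
    funext t; rw [tau_eq]; ring
  rw [h2, h3, derivA, derivB, bF]
  ring

private lemma X1aF (y x : ℝ × ℝ × ℝ) :
    X1 (aF y) x = 12*((x.1-y.1)^2+(x.2.1-y.2.1)^2) := by
  unfold X1
  have h1 : (fun t => aF y (t, x.2.1, x.2.2))
      = fun s => 4*(((x.2.1-y.2.1)^2 + (s - y.1)^2)*(s - y.1))
          + (-16*(x.2.1-y.2.1))*((x.2.2-y.2.2-y.1*x.2.1/2) + (y.2.1/2)*s) := by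
    funext t; simp only [aF]; ring
  have h3 : (fun t => aF y (x.1, x.2.1, t))
      = fun s => 4*(((x.1-y.1)^2+(x.2.1-y.2.1)^2)*(x.1-y.1))
          + (-16*(x.2.1-y.2.1))*(s + (-y.2.2 + (y.2.1*x.1-y.1*x.2.1)/2)) := by
    funext t; simp only [aF]; ring
  rw [h1, h3, derivC, derivE]
  ring

private lemma X2bF (y x : ℝ × ℝ × ℝ) :
    X2 (bF y) x = 12*((x.1-y.1)^2+(x.2.1-y.2.1)^2) := by
  unfold X2
  have h2 : (fun t => bF y (x.1, t, x.2.2))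
      = fun s => 4*(((x.1-y.1)^2 + (s - y.2.1)^2)*(s - y.2.1))
          + (16*(x.1-y.1))*((x.2.2-y.2.2+y.2.1*x.1/2) + (-y.1/2)*s) := by
    funext t; simp only [bF]; ring
  have h3 : (fun t => bF y (x.1, x.2.1, t))
      = fun s => 4*(((x.1-y.1)^2+(x.2.1-y.2.1)^2)*(x.2.1-y.2.1))
          + (16*(x.1-y.1))*(s + (-y.2.2 + (y.2.1*x.1-y.1*x.2.1)/2)) := by
    funext t; simp only [bF]; ring
  rw [h2, h3, derivC, derivE]
  ring

private lemma X1bF (y x : ℝ × ℝ × ℝ) :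
    X1 (bF y) x = 16*(x.2.2-y.2.2+(y.2.1*x.1-y.1*x.2.1)/2) := by
  unfold X1
  have h1 : (fun t => bF y (t, x.2.1, x.2.2))
      = fun s => 4*(((x.2.1-y.2.1)^2 + (s - y.1)^2)*(x.2.1-y.2.1))
          + 16*(((x.2.2-y.2.2-y.1*x.2.1/2) + (y.2.1/2)*s)*(s - y.1)) := by
    funext t; simp only [bF]; ring
  have h3 : (fun t => bF y (x.1, x.2.1, t))
      = fun s => 4*(((x.1-y.1)^2+(x.2.1-y.2.1)^2)*(x.2.1-y.2.1))
          + (16*(x.1-y.1))*(s + (-y.2.2 + (y.2.1*x.1-y.1*x.2.1)/2)) := by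
    funext t; simp only [bF]; ring
  rw [h1, h3, derivD, derivE]
  ring

private lemma X2aF (y x : ℝ × ℝ × ℝ) :
    X2 (aF y) x = -(16*(x.2.2-y.2.2+(y.2.1*x.1-y.1*x.2.1)/2)) := by
  unfold X2
  have h2 : (fun t => aF y (x.1, t, x.2.2))
      = fun s => 4*(((x.1-y.1)^2 + (s - y.2.1)^2)*(x.1-y.1))
          + (-16)*(((x.2.2-y.2.2+y.2.1*x.1/2) + (-y.1/2)*s)*(s - y.2.1)) := by
    funext t; simp only [aF]; ring
  have h3 : (fun t => aF y (x.1, x.2.1, t))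
      = fun s => 4*(((x.1-y.1)^2+(x.2.1-y.2.1)^2)*(x.1-y.1))
          + (-16*(x.2.1-y.2.1))*(s + (-y.2.2 + (y.2.1*x.1-y.1*x.2.1)/2)) := by
    funext t; simp only [aF]; ring
  rw [h2, h3, derivD, derivE]
  ring


set_option maxHeartbeats 2000000

/-- The horizontal `p`-Laplacian of `τ(x) = ‖y⁻¹·x‖_K⁴` satisfies
`Δ_{0,p}τ = (3p/4)‖∇₀τ‖^p/τ ≥ 0` where `τ > 0`, for `p > 1`. -/
theorem horizontal_p_laplacian_tau (p : ℝ) (hp : 1 < p) (y x : ℝ × ℝ × ℝ)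
    (htau : 0 < (kdist x y) ^ 4) :
    let tau : ℝ × ℝ × ℝ → ℝ := fun z => (kdist z y) ^ 4
    let a := X1 tau x
    let b := X2 tau x
    let t11 := X1 (X1 tau) x
    let t22 := X2 (X2 tau) x
    let t12 := (X1 (X2 tau) x + X2 (X1 tau) x) / 2
    let g := Real.sqrt (a ^ 2 + b ^ 2)
    let lap0 := t11 + t22
    let lapInf := t11 * a ^ 2 + 2 * t12 * a * b + t22 * b ^ 2
    g ^ (p - 2) * lap0 + (p - 2) * g ^ (p - 4) * lapInf
        = 3 * p / 4 * g ^ p / tau x ∧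
    0 ≤ g ^ (p - 2) * lap0 + (p - 2) * g ^ (p - 4) * lapInf := by

  intro tau a b t11 t22 t12 g lap0 lapInf
  have ha : a = aF y x := by
    show X1 (fun z => kdist z y ^ 4) x = aF y x
    rw [X1_tau]
  have hb : b = bF y x := by
    show X2 (fun z => kdist z y ^ 4) x = bF y x
    rw [X2_tau]
  have h11 : t11 = 12*((x.1-y.1)^2+(x.2.1-y.2.1)^2) := by
    show X1 (X1 (fun z => kdist z y ^ 4)) x = _
    rw [X1_tau, X1aF]
  have h22 : t22 = 12*((x.1-y.1)^2+(x.2.1-y.2.1)^2) := by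
    show X2 (X2 (fun z => kdist z y ^ 4)) x = _
    rw [X2_tau, X2bF]
  have h12 : t12 = 0 := by
    show (X1 (X2 (fun z => kdist z y ^ 4)) x + X2 (X1 (fun z => kdist z y ^ 4)) x) / 2 = 0
    rw [X1_tau, X2_tau, X1bF, X2aF]
    ring
  have htx : tau x = ((x.1 - y.1)^2 + (x.2.1 - y.2.1)^2)^2
      + 16*(x.2.2 - y.2.2 + (y.2.1*x.1 - y.1*x.2.1)/2)^2 := tau_eq y x
  have hTpos : 0 < tau x := htau
  have hTne : tau x ≠ 0 := ne_of_gt hTpos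
  have hE : a^2 + b^2 = 16*((x.1-y.1)^2+(x.2.1-y.2.1)^2)*(tau x) := by
    rw [ha, hb, htx]
    simp only [aF, bF]
    ring
  have hlap0 : lap0 = 24*((x.1-y.1)^2+(x.2.1-y.2.1)^2) := by
    show t11 + t22 = _
    rw [h11, h22]; ring
  have hlapInf : lapInf = 12*((x.1-y.1)^2+(x.2.1-y.2.1)^2)*(a^2+b^2) := by
    show t11 * a^2 + 2*t12*a*b + t22*b^2 = _
    rw [h11, h22, h12]; ring
  have hgnn : 0 ≤ g := Real.sqrt_nonneg _
  have hgdef : g = Real.sqrt (a^2 + b^2) := rfl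
  clear_value lapInf lap0 g t12 t22 t11 b a tau
  rcases eq_or_lt_of_le (by positivity : (0:ℝ) ≤ (x.1-y.1)^2+(x.2.1-y.2.1)^2) with hr | hr
  · -- degenerate case: the horizontal gradient vanishes
    have hU : x.1 - y.1 = 0 := by nlinarith [sq_nonneg (x.1-y.1), sq_nonneg (x.2.1-y.2.1)]
    have hV : x.2.1 - y.2.1 = 0 := by nlinarith [sq_nonneg (x.1-y.1), sq_nonneg (x.2.1-y.2.1)]
    have haz : a = 0 := by rw [ha]; simp only [aF]; rw [hU, hV]; ring
    have hbz : b = 0 := by rw [hb]; simp only [bF]; rw [hU, hV]; ring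
    have hg0 : g = 0 := by rw [hgdef, haz, hbz]; simp
    have hl0 : lap0 = 0 := by rw [hlap0, ← hr]; ring
    have hli : lapInf = 0 := by rw [hlapInf, haz, hbz]; ring
    rw [hl0, hli, hg0, Real.zero_rpow (by linarith : p ≠ 0)]
    norm_num
  · -- main case
    have hgpos : 0 < g := by
      rw [hgdef]
      apply Real.sqrt_pos.mpr
      rw [hE]
      exact mul_pos (mul_pos (by norm_num) hr) hTpos
    have hg2 : g^2 = a^2 + b^2 := by rw [hgdef]; exact Real.sq_sqrt (by positivity)
    have hpow2 : (g:ℝ)^2 = g ^ (2:ℝ) := by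
      rw [← Real.rpow_natCast g 2]; norm_num
    have e1 : g ^ (p-4) * (a^2+b^2) = g ^ (p-2) := by
      rw [← hg2, hpow2, ← Real.rpow_add hgpos]; congr 1; ring
    have e2 : g ^ p = g ^ (p-2) * (a^2+b^2) := by
      rw [← hg2, hpow2, ← Real.rpow_add hgpos]; congr 1; ring
    have e1' : g ^ (p-4) * (16*((x.1-y.1)^2+(x.2.1-y.2.1)^2)*(tau x)) = g ^ (p-2) := by
      rw [← hE, e1]
    have key : g ^ (p - 2) * lap0 + (p - 2) * g ^ (p - 4) * lapInf
        = 3 * p / 4 * g ^ p / tau x := by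
      rw [hlap0, hlapInf, e2, hE]
      have lhs2 : (p-2) * g ^ (p-4) *
          (12*((x.1-y.1)^2+(x.2.1-y.2.1)^2) * (16*((x.1-y.1)^2+(x.2.1-y.2.1)^2)*(tau x)))
          = (p-2) * (12*((x.1-y.1)^2+(x.2.1-y.2.1)^2)) * (g ^ (p-2)) := by
        rw [← e1']; ring
      rw [lhs2]
      field_simp
      ring
    exact ⟨key, by
      rw [key]
      apply div_nonneg _ (le_of_lt hTpos)
      apply mul_nonneg (by linarith) (Real.rpow_nonneg hgnn p)⟩
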